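/- arXiv:2007.02636 — 2 statements merged into one kernel-verified Lean document; each statement's English description precedes it below -/
import Mathlib

section
/- Let G be the semidihedral group of order 2ⁿ with n ≥ 4, and N = Z(G) its center. Then N has a unique nontrivial irreducible complex character φ (which is therefore self-dual), but no irreducible complex character of G lying over φ is self-dual (real-valued). -/
open Module

section Defs
variable {F : Type} [Field F] {G : Type} [Group G]
variable {V W : Type} [AddCommGroup V] [Module F V] [AddCommGroup W] [Module F W]

def IsSubrep (ρ : Representation F G V) (U : Submodule F V) : Prop :=
  ∀ (g : G), ∀ v ∈ U, ρ g v ∈ U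

def IsIrred (ρ : Representation F G V) : Prop :=
  Nontrivial V ∧ ∀ U : Submodule F V, IsSubrep ρ U → U = ⊥ ∨ U = ⊤

def RepIso (ρ : Representation F G V) (σ : Representation F G W) : Prop :=
  ∃ e : V ≃ₗ[F] W, ∀ (g : G) (v : V), e (ρ g v) = σ g (e v)

def IsSelfDual (ρ : Representation F G V) : Prop :=
  RepIso ρ ρ.dual

def IsTrivialRep (ρ : Representation F G V) : Prop := ∀ (g : G) (v : V), ρ g v = v

def EquivHom (σ : Representation F G W) (ρ : Representation F G V) :
    Submodule F (W →ₗ[F] V) where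
  carrier := {f | ∀ (g : G) (w : W), f (σ g w) = ρ g (f w)}
  add_mem' := by
    intro f f' hf hf' g w
    simp [LinearMap.add_apply, hf g w, hf' g w]
  zero_mem' := by intro g w; simp
  smul_mem' := by
    intro c f hf g w
    simp [LinearMap.smul_apply, hf g w]

noncomputable def repMult (σ : Representation F G W) (ρ : Representation F G V) : ℕ :=
  Module.finrank F (EquivHom σ ρ)

def BilinInvariant (ρ : Representation F G V) (B : V →ₗ[F] V →ₗ[F] F) : Prop :=
  ∀ (g : G) (v w : V), B (ρ g v) (ρ g w) = B v w

def Nondeg (B : V →ₗ[F] V →ₗ[F] F) : Prop := ∀ v : V, (∀ w : V, B v w = 0) → v = 0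

def IsAltForm (B : V →ₗ[F] V →ₗ[F] F) : Prop := ∀ v : V, B v v = 0

def PolarizesTo (Q : V → F) (B : V →ₗ[F] V →ₗ[F] F) : Prop :=
  (∀ (a : F) (v : V), Q (a • v) = a ^ 2 * Q v) ∧
    ∀ v w : V, Q (v + w) = Q v + B v w + Q w

def QuadInvariant (ρ : Representation F G V) (Q : V → F) : Prop :=
  ∀ (g : G) (v : V), Q (ρ g v) = Q v

def HasQuadType (ρ : Representation F G V) : Prop :=
  ∃ (Q : V → F) (B : V →ₗ[F] V →ₗ[F] F),
    PolarizesTo Q B ∧ QuadInvariant ρ Q ∧ Nondeg B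

def IsSplitting (F G : Type) [Field F] [Group G] : Prop :=
  ∀ (V : Type) [AddCommGroup V] [Module F V] (ρ : Representation F G V),
    FiniteDimensional F V → IsIrred ρ →
      ∀ f ∈ EquivHom ρ ρ, ∃ c : F, f = c • (LinearMap.id : V →ₗ[F] V)

structure RepOn (F G : Type) [Field F] [Group G] where
  carrier : Type
  [ag : AddCommGroup carrier]
  [md : Module F carrier]
  rep : Representation F G carrier

attribute [instance] RepOn.ag RepOn.md

end Defs


lemma aux_schur {G : Type} [Group G] {V : Type} [AddCommGroup V] [Module ℂ V]
    (ρ : Representation ℂ G V) [FiniteDimensional ℂ V] (hirr : IsIrred ρ)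
    (f : V →ₗ[ℂ] V) (hf : ∀ (g : G) (v : V), f (ρ g v) = ρ g (f v)) :
    ∃ c : ℂ, ∀ v, f v = c • v := by
  haveI := hirr.1
  obtain ⟨c, hc⟩ := Module.End.exists_eigenvalue (f : Module.End ℂ V)
  refine ⟨c, ?_⟩
  have hsub : IsSubrep ρ (Module.End.eigenspace f c) := by
    intro g v hv
    rw [Module.End.mem_eigenspace_iff] at hv ⊢
    rw [hf, hv, map_smul]
  rcases hirr.2 _ hsub with h | h
  · exact absurd h (Module.End.hasEigenvalue_iff.mp hc)
  · intro v
    have hv : v ∈ Module.End.eigenspace f c := h ▸ Submodule.mem_top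
    exact Module.End.mem_eigenspace_iff.mp hv

lemma rho_inv_cancel {G : Type} [Group G] {V : Type} [AddCommGroup V] [Module ℂ V]
    (ρ : Representation ℂ G V) (g : G) (v : V) : ρ g⁻¹ (ρ g v) = v := by
  rw [← Module.End.mul_apply, ← map_mul, inv_mul_cancel, map_one, Module.End.one_apply]

lemma rho_cancel_inv {G : Type} [Group G] {V : Type} [AddCommGroup V] [Module ℂ V]
    (ρ : Representation ℂ G V) (g : G) (v : V) : ρ g (ρ g⁻¹ v) = v := by
  rw [← Module.End.mul_apply, ← map_mul, mul_inv_cancel, map_one, Module.End.one_apply]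

lemma aux_form {G : Type} [Group G] [Fintype G] {V : Type} [AddCommGroup V] [Module ℂ V]
    (ρ : Representation ℂ G V) [FiniteDimensional ℂ V] (hirr : IsIrred ρ)
    (hreal : ∀ g : G, LinearMap.trace ℂ V (ρ g⁻¹) = LinearMap.trace ℂ V (ρ g)) :
    ∃ B : V →ₗ[ℂ] V →ₗ[ℂ] ℂ,
      (∀ (g : G) (v w : V), B (ρ g v) (ρ g w) = B v w) ∧ ∃ v w, B v w ≠ 0 := by
  classical
  haveI := hirr.1
  set d := finrank ℂ V with hd
  have hd0 : 0 < d := finrank_pos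
  have hdC : (d : ℂ) ≠ 0 := Nat.cast_ne_zero.mpr hd0.ne'
  set b := Module.finBasis ℂ V with hb
  have htr : ∀ f : V →ₗ[ℂ] V, LinearMap.trace ℂ V f = ∑ i, b.coord i (f (b i)) := by
    intro f
    rw [LinearMap.trace_eq_matrix_trace ℂ b]
    simp [Matrix.trace, LinearMap.toMatrix_apply, Matrix.diag, Basis.coord_apply]
  set Ψ : (V →ₗ[ℂ] V) → (V →ₗ[ℂ] V) := fun A => ∑ g : G, ρ g ∘ₗ A ∘ₗ ρ g⁻¹ with hΨ
  have hΨcomm : ∀ (A : V →ₗ[ℂ] V) (k : G) (v : V), Ψ A (ρ k v) = ρ k (Ψ A v) := by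
    intro A k v
    rw [hΨ]
    simp only [LinearMap.sum_apply, LinearMap.comp_apply]
    rw [map_sum]
    refine (Fintype.sum_bijective (fun g => k * g) (Group.mulLeft_bijective k) _ _ ?_).symm
    intro g
    simp only [map_mul, Module.End.mul_apply, mul_inv_rev]
    rw [rho_inv_cancel]
  have htrΨ : ∀ A : V →ₗ[ℂ] V,
      LinearMap.trace ℂ V (Ψ A) = (Fintype.card G : ℂ) * LinearMap.trace ℂ V A := by
    intro A
    have hterm : ∀ g : G, LinearMap.trace ℂ V (ρ g ∘ₗ A ∘ₗ ρ g⁻¹) = LinearMap.trace ℂ V A := by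
      intro g
      rw [LinearMap.trace_comp_comm', LinearMap.comp_assoc]
      have : ρ g⁻¹ ∘ₗ ρ g = LinearMap.id := by
        rw [← Module.End.mul_eq_comp, ← map_mul, inv_mul_cancel, map_one]; rfl
      rw [this, LinearMap.comp_id]
    rw [hΨ, map_sum]
    simp [hterm, Finset.sum_const, nsmul_eq_mul]
  set A : Fin d → Fin d → (V →ₗ[ℂ] V) := fun i j => LinearMap.smulRight (b.coord j) (b i) with hA
  have htrA : ∀ i j, LinearMap.trace ℂ V (A i j) = if i = j then 1 else 0 := by
    intro i j
    rw [htr]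
    have hk : ∀ k : Fin (finrank ℂ V), b.coord k ((A i j) (b k))
        = (if k = j then (1:ℂ) else 0) * (if i = k then (1:ℂ) else 0) := by
      intro k
      by_cases h1 : k = j <;> by_cases h2 : i = k <;>
        simp [hA, LinearMap.smulRight_apply, Basis.coord_apply, Basis.repr_self,
          Finsupp.single_apply, h1, h2, map_smul, smul_eq_mul]
    rw [Finset.sum_congr rfl fun k _ => hk k,
      Finset.sum_eq_single j (fun k _ hkj => by rw [if_neg hkj, zero_mul])
        (fun h => absurd (Finset.mem_univ j) h)]
    rw [if_pos rfl, one_mul]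
  have hsc : ∀ i j : Fin d, ∃ c : ℂ, ∀ v, Ψ (A i j) v = c • v := by
    intro i j
    exact aux_schur ρ hirr (Ψ (A i j)) (fun g v => hΨcomm (A i j) g v)
  choose c hc using hsc
  have key1 : ∀ i j, c i j * d = (Fintype.card G : ℂ) * (if i = j then 1 else 0) := by
    intro i j
    have heq : Ψ (A i j) = c i j • (LinearMap.id : V →ₗ[ℂ] V) := by
      apply LinearMap.ext; intro v; rw [hc i j v]; rfl
    have := htrΨ (A i j)
    rw [heq, map_smul, LinearMap.trace_id, htrA, smul_eq_mul] at this
    rw [this]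
  have key2 : ∀ i j, (∑ g : G, b.coord j (ρ g⁻¹ (b j)) * b.coord i (ρ g (b i)))
      = c i j * (if j = i then 1 else 0) := by
    intro i j
    have h1 : Ψ (A i j) (b j) = ∑ g : G, b.coord j (ρ g⁻¹ (b j)) • ρ g (b i) := by
      rw [hΨ]
      simp [LinearMap.sum_apply, LinearMap.comp_apply, hA, LinearMap.smulRight_apply, map_smul]
    have h2 : b.coord i (Ψ (A i j) (b j)) = ∑ g : G, b.coord j (ρ g⁻¹ (b j)) * b.coord i (ρ g (b i)) := by
      rw [h1, map_sum]
      simp [map_smul, smul_eq_mul]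
    rw [← h2, hc i j, map_smul, smul_eq_mul]
    congr 1
    simp [Basis.coord_apply, Basis.repr_self, Finsupp.single_apply]
  have key3 : (∑ i : Fin d, c i i) = (Fintype.card G : ℂ) := by
    have hcii : ∀ i : Fin d, c i i = (Fintype.card G : ℂ) / d := by
      intro i
      have := key1 i i
      rw [if_pos rfl, mul_one] at this
      field_simp [this]
      exact this
    rw [Finset.sum_congr rfl (fun i _ => hcii i)]
    rw [Finset.sum_const, Finset.card_univ, Fintype.card_fin, nsmul_eq_mul]
    field_simp
  have key4 : (∑ g : G, LinearMap.trace ℂ V (ρ g⁻¹) * LinearMap.trace ℂ V (ρ g))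
      = (Fintype.card G : ℂ) := by
    have e1 : (∑ g : G, LinearMap.trace ℂ V (ρ g⁻¹) * LinearMap.trace ℂ V (ρ g))
        = ∑ g : G, ∑ j : Fin d, ∑ i : Fin d,
            b.coord j (ρ g⁻¹ (b j)) * b.coord i (ρ g (b i)) := by
      refine Finset.sum_congr rfl fun g _ => ?_
      rw [htr, htr, Finset.sum_mul_sum]
    rw [e1, Finset.sum_comm]
    have e2 : ∀ j : Fin d, (∑ g : G, ∑ i : Fin d, b.coord j (ρ g⁻¹ (b j)) * b.coord i (ρ g (b i)))
        = ∑ i : Fin d, c i j * (if j = i then 1 else 0) := by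
      intro j
      rw [Finset.sum_comm]
      exact Finset.sum_congr rfl fun i _ => key2 i j
    rw [Finset.sum_congr rfl fun j _ => e2 j]
    have e3 : ∀ j : Fin d, (∑ i : Fin d, c i j * (if j = i then 1 else 0)) = c j j := by
      intro j
      simp [mul_ite]
    rw [Finset.sum_congr rfl fun j _ => e3 j, key3]
  -- use realness
  have key5 : (∑ g : G, ∑ i : Fin d, ∑ j : Fin d,
      b.coord i (ρ g (b i)) * b.coord j (ρ g (b j))) = (Fintype.card G : ℂ) := by
    rw [← key4]
    refine Finset.sum_congr rfl fun g _ => ?_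
    rw [hreal g, htr, Finset.sum_mul_sum]
  have key6 : ∃ i j : Fin d, (∑ g : G, b.coord i (ρ g (b i)) * b.coord j (ρ g (b j))) ≠ 0 := by
    by_contra h
    push_neg at h
    have h0 : (∑ g : G, ∑ i : Fin d, ∑ j : Fin d,
        b.coord i (ρ g (b i)) * b.coord j (ρ g (b j))) = 0 := by
      rw [Finset.sum_comm]
      refine Finset.sum_eq_zero fun i _ => ?_
      rw [Finset.sum_comm]
      exact Finset.sum_eq_zero fun j _ => h i j
    rw [h0] at key5
    exact (Nat.cast_ne_zero.mpr Fintype.card_ne_zero) key5.symm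
  obtain ⟨i, j, hS⟩ := key6
  set B : V →ₗ[ℂ] V →ₗ[ℂ] ℂ := LinearMap.mk₂ ℂ
      (fun v w => ∑ g : G, b.coord i (ρ g v) * b.coord j (ρ g w))
      (by intro m₁ m₂ nn; simp [map_add, add_mul, Finset.sum_add_distrib])
      (by intro cc m nn; simp [map_smul, smul_eq_mul, mul_assoc, Finset.mul_sum])
      (by intro m n₁ n₂; simp [map_add, mul_add, Finset.sum_add_distrib])
      (by intro cc m nn; simp [map_smul, smul_eq_mul, Finset.mul_sum]; ring_nf;
          exact Finset.sum_congr rfl fun g _ => by ring) with hB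
  refine ⟨B, ?_, ⟨b i, b j, ?_⟩⟩
  · intro k v w
    rw [hB]
    simp only [LinearMap.mk₂_apply]
    refine Fintype.sum_bijective (fun g => g * k) (Group.mulRight_bijective k) _ _ ?_
    intro g
    rw [map_mul, Module.End.mul_apply, Module.End.mul_apply]
  · rw [hB]
    simpa using hS

lemma aux_nondeg {G : Type} [Group G] {V : Type} [AddCommGroup V] [Module ℂ V]
    (ρ : Representation ℂ G V) (hirr : IsIrred ρ) (B : V →ₗ[ℂ] V →ₗ[ℂ] ℂ)
    (hinv : ∀ (g : G) (v w : V), B (ρ g v) (ρ g w) = B v w)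
    (hne : ∃ v w, B v w ≠ 0) :
    ∀ v, (∀ w, B v w = 0) → v = 0 := by
  set R : Submodule ℂ V :=
    { carrier := {v | ∀ w, B v w = 0}
      add_mem' := by
        intro a b ha hb w
        rw [map_add, LinearMap.add_apply, ha w, hb w, add_zero]
      zero_mem' := by
        intro w
        rw [map_zero, LinearMap.zero_apply]
      smul_mem' := by
        intro cc a ha w
        rw [map_smul, LinearMap.smul_apply, ha w, smul_zero] } with hR
  have hmem : ∀ v : V, v ∈ R ↔ ∀ w, B v w = 0 := fun v => Iff.rfl
  have hsub : IsSubrep ρ R := by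
    intro g v hv w
    have hw : w = ρ g (ρ g⁻¹ w) := (rho_cancel_inv ρ g w).symm
    rw [hmem] at hv
    rw [hw, hinv g, hv]
  rcases hirr.2 R hsub with h | h
  · intro v hv
    have : v ∈ R := (hmem v).mpr hv
    rw [h] at this
    simpa using this
  · exfalso
    obtain ⟨v, w, hvw⟩ := hne
    have : v ∈ R := h ▸ Submodule.mem_top
    exact hvw ((hmem v).mp this w)
lemma sd_facts {G : Type} [Group G] [Fintype G] (n : ℕ) (hn : 4 ≤ n)
    (r s : G) (hr : r ^ (2 ^ (n - 1)) = 1) (hs : s ^ 2 = 1)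
    (hrs : s * r * s = r ^ (2 ^ (n - 2) - 1))
    (hgen : Subgroup.closure {r, s} = ⊤) (hcard : Fintype.card G = 2 ^ n) :
    (∀ g : G, ∃ k : ℕ, g = r ^ k ∨ g = r ^ k * s) ∧
    orderOf r = 2 ^ (n - 1) ∧
    (∀ x : G, x ∈ Subgroup.center G ↔ x = 1 ∨ x = r ^ (2 ^ (n - 2))) := by
  classical
  obtain ⟨a, rfl⟩ : ∃ a, n = a + 4 := ⟨n - 4, by omega⟩
  have e1 : a + 4 - 1 = a + 3 := by omega
  have e2 : a + 4 - 2 = a + 2 := by omega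
  rw [e1] at hr ⊢
  rw [e2] at hrs ⊢
  set x : ℕ := 2 ^ (a + 1) with hxdef
  have hx1 : 2 ≤ x := by
    have : (2:ℕ) ^ 1 ≤ 2 ^ (a + 1) := Nat.pow_le_pow_right (by norm_num) (by omega)
    simpa using this
  have hx2 : (2:ℕ) ^ (a + 2) = 2 * x := by rw [hxdef, pow_succ]; ring
  have hx4 : (2:ℕ) ^ (a + 3) = 4 * x := by rw [hxdef, pow_succ, pow_succ]; ring
  set m : ℕ := 2 ^ (a + 2) - 1 with hmdef
  have hm : m = 2 * x - 1 := by rw [hmdef, hx2]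
  have hm1 : 1 ≤ m := by rw [hm]; omega
  have hss : s * s = 1 := by rw [← pow_two]; exact hs
  have hsinv : s⁻¹ = s := inv_eq_of_mul_eq_one_right hss
  have hrN : r ^ (4 * x) = 1 := by rw [← hx4]; exact hr
  have hconj1 : s * r * s⁻¹ = r ^ m := by rw [hsinv]; exact hrs
  have hconj : ∀ k : ℕ, s * r ^ k * s = r ^ (m * k) := by
    intro k
    calc s * r ^ k * s = s * r ^ k * s⁻¹ := by rw [hsinv]
      _ = (s * r * s⁻¹) ^ k := conj_pow.symm
      _ = (r ^ m) ^ k := by rw [hconj1]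
      _ = r ^ (m * k) := by rw [← pow_mul]
  have hsr : ∀ k : ℕ, s * r ^ k = r ^ (m * k) * s := by
    intro k
    calc s * r ^ k = s * r ^ k * (s * s) := by rw [hss, mul_one]
      _ = (s * r ^ k * s) * s := by group
      _ = r ^ (m * k) * s := by rw [hconj k]
  have hinvpow : ∀ k : ℕ, (r ^ k)⁻¹ = r ^ (k * (4 * x - 1)) := by
    intro k
    apply inv_eq_of_mul_eq_one_right
    rw [← pow_add]
    have harith : k + k * (4 * x - 1) = (4 * x) * k := by
      obtain ⟨M, hM⟩ : ∃ M, 4 * x = M + 1 := ⟨4 * x - 1, by omega⟩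
      rw [hM]
      simp [Nat.add_sub_cancel]
      ring
    rw [harith, pow_mul, hrN, one_pow]
  -- the subgroup of elements of the form r^k or r^k s
  set K : Subgroup G :=
    { carrier := {g | ∃ k : ℕ, g = r ^ k ∨ g = r ^ k * s}
      one_mem' := ⟨0, Or.inl (by simp)⟩
      mul_mem' := by
        rintro y w ⟨k, hk | hk⟩ ⟨l, hl | hl⟩ <;> subst hk <;> subst hl
        · exact ⟨k + l, Or.inl (pow_add r k l).symm⟩
        · exact ⟨k + l, Or.inr (by rw [← mul_assoc, ← pow_add])⟩
        · refine ⟨k + m * l, Or.inr ?_⟩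
          rw [mul_assoc, hsr l, ← mul_assoc, ← pow_add]
        · refine ⟨k + m * l, Or.inl ?_⟩
          calc r ^ k * s * (r ^ l * s) = r ^ k * (s * r ^ l) * s := by group
            _ = r ^ k * (r ^ (m * l) * s) * s := by rw [hsr l]
            _ = (r ^ k * r ^ (m * l)) * (s * s) := by group
            _ = r ^ (k + m * l) := by rw [hss, mul_one, ← pow_add]
      inv_mem' := by
        rintro y ⟨k, hk | hk⟩ <;> subst hk
        · exact ⟨k * (4 * x - 1), Or.inl (hinvpow k)⟩
        · refine ⟨m * (k * (4 * x - 1)), Or.inr ?_⟩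
          rw [mul_inv_rev, hsinv, hinvpow k, hsr] } with hK
  have hKtop : ∀ g : G, ∃ k : ℕ, g = r ^ k ∨ g = r ^ k * s := by
    have hle : Subgroup.closure {r, s} ≤ K := by
      rw [Subgroup.closure_le]
      rintro y hy
      simp only [Set.mem_insert_iff, Set.mem_singleton_iff] at hy
      rcases hy with h | h
      · exact ⟨1, Or.inl (by rw [h, pow_one])⟩
      · exact ⟨0, Or.inr (by rw [h]; simp)⟩
    intro g
    have : g ∈ K := by
      have : (⊤ : Subgroup G) ≤ K := hgen ▸ hle
      exact this (Subgroup.mem_top g)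
    exact this
  have hpos : 0 < orderOf r := orderOf_pos r
  have horder : orderOf r = 2 ^ (a + 3) := by
    have hdvd : orderOf r ∣ 2 ^ (a + 3) := orderOf_dvd_of_pow_eq_one hr
    have hcov : (Finset.univ : Finset G) ⊆
        (Finset.range (orderOf r)).image (fun k => r ^ k) ∪
        (Finset.range (orderOf r)).image (fun k => r ^ k * s) := by
      intro g _
      obtain ⟨k, hk | hk⟩ := hKtop g
      · refine Finset.mem_union_left _ (Finset.mem_image.mpr
          ⟨k % orderOf r, Finset.mem_range.mpr (Nat.mod_lt _ hpos), ?_⟩)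
        rw [pow_mod_orderOf]; exact hk.symm
      · refine Finset.mem_union_right _ (Finset.mem_image.mpr
          ⟨k % orderOf r, Finset.mem_range.mpr (Nat.mod_lt _ hpos), ?_⟩)
        rw [pow_mod_orderOf]; exact hk.symm
    have hcard2 : Fintype.card G ≤ 2 * orderOf r := by
      calc Fintype.card G = (Finset.univ : Finset G).card := Finset.card_univ.symm
        _ ≤ ((Finset.range (orderOf r)).image (fun k => r ^ k) ∪
            (Finset.range (orderOf r)).image (fun k => r ^ k * s)).card :=
          Finset.card_le_card hcov
        _ ≤ ((Finset.range (orderOf r)).image (fun k => r ^ k)).card +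
            ((Finset.range (orderOf r)).image (fun k => r ^ k * s)).card :=
          Finset.card_union_le _ _
        _ ≤ (Finset.range (orderOf r)).card + (Finset.range (orderOf r)).card :=
          Nat.add_le_add Finset.card_image_le Finset.card_image_le
        _ = 2 * orderOf r := by rw [Finset.card_range]; ring
    rw [hcard] at hcard2
    have hpow : (2:ℕ) ^ (a + 4) = 2 * 2 ^ (a + 3) := by rw [pow_succ]; ring
    rw [hpow] at hcard2
    have hge : 2 ^ (a + 3) ≤ orderOf r := by omega
    exact le_antisymm (Nat.le_of_dvd (by positivity) hdvd) hge
  refine ⟨hKtop, horder, ?_⟩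
  -- center computation
  set z : G := r ^ (2 ^ (a + 2)) with hzdef
  have hz2 : z * z = 1 := by
    rw [hzdef, ← pow_add, hx2]
    have : 2 * x + 2 * x = 4 * x := by ring
    rw [this, hrN]
  have hz1 : z ≠ 1 := by
    intro h
    have hdvd := orderOf_dvd_of_pow_eq_one h
    rw [horder] at hdvd
    have hle := Nat.le_of_dvd (by positivity) hdvd
    rw [hx2, hx4] at hle
    omega
  have hzs : s * z = z * s := by
    have h1 : s * z * s = r ^ (m * 2 ^ (a + 2)) := hconj _
    have h2 : r ^ (m * 2 ^ (a + 2)) = z := by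
      have harith : m * 2 ^ (a + 2) = 2 ^ (a + 2) + 4 * x * (x - 1) := by
        rw [hm, hx2]
        zify [show (1:ℕ) ≤ x by omega, show (1:ℕ) ≤ 2 * x by omega]
        ring
      rw [harith, pow_add, pow_mul, hrN, one_pow, mul_one]
    have h3 : s * z * s = z := h1.trans h2
    calc s * z = s * z * (s * s) := by rw [hss, mul_one]
      _ = (s * z * s) * s := by group
      _ = z * s := by rw [h3]
  have hzcomm : ∀ g : G, g * z = z * g := by
    intro g
    obtain ⟨k, hk | hk⟩ := hKtop g <;> subst hk
    · rw [hzdef, pow_mul_comm]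
    · calc r ^ k * s * z = r ^ k * (s * z) := by group
        _ = r ^ k * (z * s) := by rw [hzs]
        _ = (r ^ k * z) * s := by group
        _ = (z * r ^ k) * s := by rw [hzdef, pow_mul_comm]
        _ = z * (r ^ k * s) := by group
  intro y
  constructor
  · intro hy
    obtain ⟨k, hk | hk⟩ := hKtop y <;> subst hk
    · -- y = r^k central
      have hcs : s * r ^ k = r ^ k * s := Subgroup.mem_center_iff.mp hy s
      have heq : r ^ (m * k) = r ^ k := by
        calc r ^ (m * k) = s * r ^ k * s := (hconj k).symm
          _ = r ^ k * (s * s) := by rw [hcs]; group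
          _ = r ^ k := by rw [hss, mul_one]
      have hmod : m * k ≡ k [MOD orderOf r] := pow_eq_pow_iff_modEq.mp heq
      rw [horder, hx4] at hmod
      have hdvd : 4 * x ∣ m * k - k := (Nat.modEq_iff_dvd' (Nat.le_mul_of_pos_left k (by omega))).mp hmod.symm
      have harith : m * k - k = 2 * ((x - 1) * k) := by
        have e : m * k = 2 * ((x - 1) * k) + k := by
          rw [hm]
          zify [show (1:ℕ) ≤ x by omega, show (1:ℕ) ≤ 2 * x by omega]
          ring
        omega
      rw [harith] at hdvd
      have hdvd2 : 2 * x ∣ k * (x - 1) := by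
        have h22 : 2 * (2 * x) ∣ 2 * (k * (x - 1)) := by
          rw [show 2 * (2 * x) = 4 * x by ring, show 2 * (k * (x-1)) = 2 * ((x-1) * k) by ring]
          exact hdvd
        exact (mul_dvd_mul_iff_left (by norm_num : (2:ℕ) ≠ 0)).mp h22
      have hcop : Nat.Coprime (2 * x) (x - 1) := by
        have hodd : Odd (x - 1) := Nat.Even.sub_odd (by omega)
          (by rw [hxdef]; exact (Nat.even_pow).mpr ⟨even_two, by omega⟩) odd_one
        have hc2 : Nat.Coprime (x - 1) 2 := Nat.coprime_two_right.mpr hodd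
        have hcx : Nat.Coprime (x - 1) x := by
          have hx' : x - 1 + 1 = x := by omega
          rw [← hx']
          exact Nat.coprime_self_add_right.mpr (Nat.coprime_one_right _)
        exact (Nat.Coprime.mul_right hc2 hcx).symm
      have hdvdk : 2 * x ∣ k := hcop.dvd_of_dvd_mul_right hdvd2
      obtain ⟨j, rfl⟩ := hdvdk
      have hzj : r ^ (2 * x * j) = z ^ j := by rw [hzdef, hx2, pow_mul]
      rcases Nat.even_or_odd j with ⟨t, rfl⟩ | ⟨t, rfl⟩
      · left
        rw [hzj, show t + t = 2 * t by ring, pow_mul, pow_two, hz2, one_pow]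
      · right
        rw [hzj, pow_add, pow_mul, pow_two, hz2, one_pow, one_mul, pow_one]
    · -- y = r^k * s central: impossible
      exfalso
      have hcr : r * (r ^ k * s) = (r ^ k * s) * r := Subgroup.mem_center_iff.mp hy r
      -- LHS = r^(k+1) * s ; RHS = r^(k+m) * s
      have hL : r * (r ^ k * s) = r ^ (k + 1) * s := by
        rw [← mul_assoc, ← pow_succ']
      have hR : (r ^ k * s) * r = r ^ (k + m) * s := by
        calc (r ^ k * s) * r = r ^ k * (s * r ^ 1) := by group
          _ = r ^ k * (r ^ (m * 1) * s) := by rw [hsr 1]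
          _ = r ^ (k + m) * s := by rw [mul_one, ← mul_assoc, ← pow_add]
      have heq : r ^ (k + 1) = r ^ (k + m) := by
        have := hL.symm.trans (hcr.trans hR)
        exact mul_right_cancel this
      have hmod : k + 1 ≡ k + m [MOD orderOf r] := pow_eq_pow_iff_modEq.mp heq
      have hmod2 : 1 ≡ m [MOD orderOf r] := Nat.ModEq.add_left_cancel' k hmod
      rw [horder, hx4] at hmod2
      have hdvd : 4 * x ∣ m - 1 := (Nat.modEq_iff_dvd' hm1).mp hmod2
      have : m - 1 = 2 * x - 2 := by omega
      rw [this] at hdvd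
      have := Nat.le_of_dvd (by omega) hdvd
      omega
  · rintro (rfl | rfl)
    · exact Subgroup.one_mem _
    · exact Subgroup.mem_center_iff.mpr hzcomm

/-- for the semidihedral group G of order 2^n (n ≥ 4), the center N = Z(G) has a
unique nontrivial irreducible complex character φ, but no irreducible complex representation of
G lying over φ has a real-valued (self-dual) character. -/
theorem stmt_17 {G : Type} [Group G] [Fintype G] (n : ℕ) (hn : 4 ≤ n)
    (r s : G) (hr : r ^ (2 ^ (n - 1)) = 1) (hs : s ^ 2 = 1)
    (hrs : s * r * s = r ^ (2 ^ (n - 2) - 1))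
    (hgen : Subgroup.closure {r, s} = ⊤) (hcard : Fintype.card G = 2 ^ n) :
    (∃! φ : ↥(Subgroup.center G) →* ℂ, φ ≠ 1) ∧
    ∀ φ : ↥(Subgroup.center G) →* ℂ, φ ≠ 1 →
      ∀ (V : Type) [AddCommGroup V] [Module ℂ V] (ρ : Representation ℂ G V),
        FiniteDimensional ℂ V → IsIrred ρ →
        (∃ v : V, v ≠ 0 ∧ ∀ z : ↥(Subgroup.center G), ρ (z : G) v = φ z • v) →
        ¬ (∀ g : G, LinearMap.trace ℂ V (ρ g⁻¹) = LinearMap.trace ℂ V (ρ g)) := by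
  classical
  obtain ⟨a, rfl⟩ : ∃ a, n = a + 4 := ⟨n - 4, by omega⟩
  have e1 : a + 4 - 1 = a + 3 := by omega
  have e2 : a + 4 - 2 = a + 2 := by omega
  obtain ⟨hKtop, horder, hcenter⟩ := sd_facts (a + 4) hn r s hr hs hrs hgen hcard
  rw [e1] at hr horder
  rw [e2] at hrs hcenter
  have hss : s * s = 1 := by rw [← pow_two]; exact hs
  set z : G := r ^ (2 ^ (a + 2)) with hzdef
  have hzmem : z ∈ Subgroup.center G := (hcenter z).mpr (Or.inr rfl)
  have hpow22 : (2:ℕ) ^ (a + 2) + 2 ^ (a + 2) = 2 ^ (a + 3) := by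
    have h : (2:ℕ) ^ (a + 3) = 2 ^ (a + 2) * 2 := by rw [pow_succ]
    omega
  have hz2 : z * z = 1 := by
    rw [hzdef, ← pow_add, hpow22]; exact hr
  have hz1 : z ≠ 1 := by
    intro h
    rw [hzdef] at h
    have hdvd := orderOf_dvd_of_pow_eq_one h
    rw [horder] at hdvd
    have hle : (2:ℕ) ^ (a + 3) ≤ 2 ^ (a + 2) := Nat.le_of_dvd (by positivity) hdvd
    have heq : (2:ℕ) ^ (a + 3) = 2 ^ (a + 2) * 2 := by rw [pow_succ]
    have hpos : 0 < (2:ℕ) ^ (a + 2) := by positivity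
    omega
  have hzcen1 : ∀ x : ↥(Subgroup.center G), (x : G) = 1 ∨ (x : G) = z :=
    fun x => (hcenter x).mp x.2
  set zc : ↥(Subgroup.center G) := ⟨z, hzmem⟩ with hzc
  have hzcsq : zc * zc = 1 := by
    apply Subtype.ext
    simpa using hz2
  -- every nontrivial character of the center sends zc to -1
  have hval : ∀ ψ : ↥(Subgroup.center G) →* ℂ, ψ ≠ 1 → ψ zc = -1 := by
    intro ψ hψ
    have hsq : ψ zc * ψ zc = 1 := by rw [← map_mul, hzcsq, map_one]
    have hne : ψ zc ≠ 1 := by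
      intro h1
      apply hψ
      ext y
      rcases hzcen1 y with hy | hy
      · have hy1 : y = 1 := Subtype.ext hy
        rw [hy1, map_one]; rfl
      · have hy1 : y = zc := Subtype.ext hy
        rw [hy1, h1]; rfl
    rcases mul_self_eq_one_iff.mp hsq with h | h
    · exact absurd h hne
    · exact h
  set φ₀ : ↥(Subgroup.center G) →* ℂ :=
    { toFun := fun y => if (y : G) = 1 then 1 else -1
      map_one' := by simp
      map_mul' := by
        intro u v
        by_cases hu : (u : G) = 1
        · have huv : ((u * v : ↥(Subgroup.center G)) : G) = (v : G) := by
            rw [Subgroup.coe_mul, hu, one_mul]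
          simp only [huv, if_pos hu, one_mul]
        · by_cases hv : (v : G) = 1
          · have huv : ((u * v : ↥(Subgroup.center G)) : G) = (u : G) := by
              rw [Subgroup.coe_mul, hv, mul_one]
            simp only [huv, if_pos hv, mul_one]
          · have hu' : (u : G) = z := (hzcen1 u).resolve_left hu
            have hv' : (v : G) = z := (hzcen1 v).resolve_left hv
            have huv : ((u * v : ↥(Subgroup.center G)) : G) = 1 := by
              rw [Subgroup.coe_mul, hu', hv', hz2]
            rw [if_pos huv, if_neg hu, if_neg hv]
            norm_num } with hφ₀
  have hφ₀z : φ₀ zc = -1 := by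
    show (if (zc : G) = 1 then (1:ℂ) else -1) = -1
    exact if_neg hz1
  have hφ₀ne : φ₀ ≠ 1 := by
    intro h
    rw [h] at hφ₀z
    have : (1 : ℂ) = -1 := hφ₀z
    norm_num at this
  constructor
  · refine ⟨φ₀, hφ₀ne, ?_⟩
    intro ψ hψ
    ext y
    rcases hzcen1 y with hy | hy
    · have hy1 : y = 1 := Subtype.ext hy
      rw [hy1, map_one, map_one]
    · have hy1 : y = zc := Subtype.ext hy
      rw [hy1, hval ψ hψ, hφ₀z]
  · intro φ hφ V iV mV ρ hFD hirr hover hreal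
    haveI := hFD
    haveI := hirr.1
    obtain ⟨v₀, hv₀ne, hv₀⟩ := hover
    have hφz : φ zc = -1 := hval φ hφ
    -- ρ z = -1
    have hρz : ∀ v : V, ρ z v = -v := by
      set Wm : Submodule ℂ V := Module.End.eigenspace (ρ z : Module.End ℂ V) (-1) with hWm
      have hsub : IsSubrep ρ Wm := by
        intro g v hv
        rw [hWm, Module.End.mem_eigenspace_iff] at hv ⊢
        have hzg : z * g = g * z := (Subgroup.mem_center_iff.mp hzmem g).symm
        calc ρ z (ρ g v) = ρ (z * g) v := by rw [map_mul]; rfl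
          _ = ρ (g * z) v := by rw [hzg]
          _ = ρ g (ρ z v) := by rw [map_mul]; rfl
          _ = ρ g ((-1:ℂ) • v) := by rw [hv]
          _ = (-1:ℂ) • ρ g v := LinearMap.map_smul _ _ _
      have hmemv : v₀ ∈ Wm := by
        rw [hWm, Module.End.mem_eigenspace_iff]
        have h := hv₀ zc
        rw [hφz] at h
        exact h
      rcases hirr.2 Wm hsub with h | h
      · exfalso
        rw [h] at hmemv
        exact hv₀ne (by simpa using hmemv)
      · intro v
        have hv : v ∈ Wm := h ▸ Submodule.mem_top
        rw [hWm, Module.End.mem_eigenspace_iff] at hv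
        rw [hv]; simp
    obtain ⟨B, hBinv, hBne⟩ := aux_form ρ hirr hreal
    have hnd := aux_nondeg ρ hirr B hBinv hBne
    obtain ⟨c, hcval⟩ := Module.End.exists_eigenvalue (ρ r : Module.End ℂ V)
    obtain ⟨v, hv⟩ := hcval.exists_hasEigenvector
    have hvne : v ≠ 0 := hv.2
    have hrv : ρ r v = c • v := hv.apply_eq_smul
    have hpow : ∀ (k : ℕ) (t : ℂ) (w : V), ρ r w = t • w → ρ (r ^ k) w = t ^ k • w := by
      intro k
      induction k with
      | zero => intro t w h; simp
      | succ k ih =>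
        intro t w h
        have : ρ (r ^ (k+1)) w = ρ (r ^ k) (ρ r w) := by
          rw [pow_succ, map_mul]; rfl
        rw [this, h, LinearMap.map_smul, ih t w h, smul_smul, pow_succ, mul_comm]
    have hzv : ρ z v = c ^ (2 ^ (a+2)) • v := by
      rw [hzdef]; exact hpow _ c v hrv
    have hce2 : c ^ (2 ^ (a+2)) = -1 := by
      have h1 : c ^ (2 ^ (a+2)) • v = -v := by rw [← hzv, hρz]
      have h2 : (c ^ (2 ^ (a+2)) + 1) • v = 0 := by
        rw [add_smul, one_smul, h1, neg_add_cancel]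
      rcases smul_eq_zero.mp h2 with h | h
      · exact eq_neg_of_add_eq_zero_left h
      · exact absurd h hvne
    have hcN : c ^ (2 ^ (a+3)) = 1 := by
      rw [show (2:ℕ) ^ (a+3) = 2 ^ (a+2) * 2 from by rw [pow_succ], pow_mul, hce2]
      norm_num
    have hc2ne : c * c ≠ 1 := by
      intro h
      have h1 : c ^ (2 ^ (a+2)) = 1 := by
        rw [show (2:ℕ) ^ (a+2) = 2 * 2 ^ (a+1) from by rw [pow_succ]; ring, pow_mul,
          pow_two, h, one_pow]
      rw [hce2] at h1
      norm_num at h1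
    set m : ℕ := 2 ^ (a + 2) - 1 with hmdef
    have hmpos : 1 ≤ m := by
      have : (4:ℕ) ≤ 2 ^ (a+2) := by
        calc (4:ℕ) = 2 ^ 2 := by norm_num
          _ ≤ 2 ^ (a+2) := Nat.pow_le_pow_right (by norm_num) (by omega)
      omega
    have hm1 : m + 1 = 2 ^ (a+2) := by
      have : (1:ℕ) ≤ 2 ^ (a+2) := Nat.one_le_two_pow
      omega
    set μ : ℂ := c ^ m with hμdef
    have hcμ : c * μ = -1 := by
      rw [hμdef, ← pow_succ', hm1, hce2]
    have hμm : μ ^ m = c := by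
      rw [hμdef, ← pow_mul]
      have harith : m * m = 1 + 2 ^ (a+3) * (2 ^ (a+1) - 1) := by
        have hx2 : (2:ℕ) ^ (a+2) = 2 * 2 ^ (a+1) := by rw [pow_succ]; ring
        have hx4 : (2:ℕ) ^ (a+3) = 4 * 2 ^ (a+1) := by rw [pow_succ, pow_succ]; ring
        have hx1 : (2:ℕ) ≤ 2 ^ (a+1) := by
          calc (2:ℕ) = 2 ^ 1 := by norm_num
            _ ≤ 2 ^ (a+1) := Nat.pow_le_pow_right (by norm_num) (by omega)
        rw [hmdef, hx2, hx4]
        zify [show (1:ℕ) ≤ 2 ^ (a+1) by omega, show (1:ℕ) ≤ 2 * 2 ^ (a+1) by omega]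
        ring
      rw [harith, pow_add, pow_mul, hcN, one_pow, mul_one, pow_one]
    -- conjugation relation r * s = s * r^m
    have hrs1 : r * s = s * r ^ m := by
      calc r * s = s * (s * r * s) := by
            rw [← mul_assoc, ← mul_assoc, hss, one_mul]
        _ = s * r ^ m := by rw [hrs]
    -- eigenspaces
    set Vl : Submodule ℂ V := Module.End.eigenspace (ρ r : Module.End ℂ V) c with hVl
    set Vm : Submodule ℂ V := Module.End.eigenspace (ρ r : Module.End ℂ V) μ with hVm
    have hmeml : ∀ w : V, w ∈ Vl ↔ ρ r w = c • w := fun w => Module.End.mem_eigenspace_iff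
    have hmemm : ∀ w : V, w ∈ Vm ↔ ρ r w = μ • w := fun w => Module.End.mem_eigenspace_iff
    have hswap1 : ∀ w ∈ Vl, ρ s w ∈ Vm := by
      intro w hw
      rw [hmemm]
      have h1 : ρ r (ρ s w) = ρ s (ρ (r ^ m) w) := by
        rw [← Module.End.mul_apply, ← map_mul, hrs1, map_mul]; rfl
      rw [h1, hpow m c w ((hmeml w).mp hw), LinearMap.map_smul, hμdef]
    have hswap2 : ∀ w ∈ Vm, ρ s w ∈ Vl := by
      intro w hw
      rw [hmeml]
      have h1 : ρ r (ρ s w) = ρ s (ρ (r ^ m) w) := by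
        rw [← Module.End.mul_apply, ← map_mul, hrs1, map_mul]; rfl
      rw [h1, hpow m μ w ((hmemm w).mp hw), LinearMap.map_smul, hμm]
    have hrot : ∀ (k : ℕ) (t : ℂ) (w : V), ρ r w = t • w → ρ r (ρ (r ^ k) w) = t • ρ (r ^ k) w := by
      intro k t w h
      have h1 : ρ r (ρ (r ^ k) w) = ρ (r ^ k) (ρ r w) := by
        rw [← Module.End.mul_apply, ← map_mul, ← pow_succ', pow_succ, map_mul]; rfl
      rw [h1, h, LinearMap.map_smul]
    have hrotl : ∀ (k : ℕ), ∀ w ∈ Vl, ρ (r ^ k) w ∈ Vl := by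
      intro k w hw
      rw [hmeml]
      exact hrot k c w ((hmeml w).mp hw)
    have hrotm : ∀ (k : ℕ), ∀ w ∈ Vm, ρ (r ^ k) w ∈ Vm := by
      intro k w hw
      rw [hmemm]
      exact hrot k μ w ((hmemm w).mp hw)
    set U : Submodule ℂ V := Vl ⊔ Vm with hU
    have hUsub : IsSubrep ρ U := by
      intro g w hw
      rcases Submodule.mem_sup.mp hw with ⟨w1, h1, w2, h2, rfl⟩
      obtain ⟨k, hg | hg⟩ := hKtop g <;> subst hg
      · rw [map_add]
        exact Submodule.add_mem _ (Submodule.mem_sup_left (hrotl k w1 h1))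
          (Submodule.mem_sup_right (hrotm k w2 h2))
      · have hsplit : ρ (r ^ k * s) (w1 + w2) = ρ (r ^ k) (ρ s w1) + ρ (r ^ k) (ρ s w2) := by
          rw [map_mul, Module.End.mul_apply, map_add, map_add]
        rw [hsplit]
        exact Submodule.add_mem _ (Submodule.mem_sup_right (hrotm k _ (hswap1 w1 h1)))
          (Submodule.mem_sup_left (hrotl k _ (hswap2 w2 h2)))
    have hUtop : U = ⊤ := by
      rcases hirr.2 U hUsub with h | h
      · exfalso
        have : v ∈ U := Submodule.mem_sup_left ((hmeml v).mpr hrv)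
        rw [h] at this
        exact hvne (by simpa using this)
      · exact h
    have hzero : ∀ w : V, B v w = 0 := by
      intro w
      have hw : w ∈ U := hUtop ▸ Submodule.mem_top
      rcases Submodule.mem_sup.mp hw with ⟨w1, h1, w2, h2, rfl⟩
      have hBsmul : ∀ (t u : ℂ) (p q : V), B (t • p) (u • q) = t * (u * B p q) := by
        intro t u p q
        simp only [LinearMap.map_smul, LinearMap.smul_apply, smul_eq_mul]
      have e1 : B v w1 = 0 := by
        have hinv := hBinv r v w1
        rw [hrv, (hmeml w1).mp h1, hBsmul] at hinv
        have h3 : (c * c - 1) * B v w1 = 0 := by linear_combination hinv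
        rcases mul_eq_zero.mp h3 with h | h
        · exact absurd (sub_eq_zero.mp h) hc2ne
        · exact h
      have e2 : B v w2 = 0 := by
        have hinv := hBinv r v w2
        rw [hrv, (hmemm w2).mp h2, hBsmul] at hinv
        have h3 : (c * μ) * B v w2 = B v w2 := by rw [mul_assoc]; exact hinv
        rw [hcμ] at h3
        have h4 : (2:ℂ) * B v w2 = 0 := by linear_combination -h3
        rcases mul_eq_zero.mp h4 with h | h
        · norm_num at h
        · exact h
      rw [map_add, e1, e2, add_zero]
    exact hvne (hnd v hzero)
end

section
/- Let G be a finite group, N a normal subgroup, F a field of characteristic 2 that is a splitting field, and V an irreducible FG-module affording a non-degenerate G-invariant bilinear form B. If W is an irreducible FN-submodule of V↓_N occurring with multiplicity 1 in V↓_N and W is self-dual as FN-module, then the restriction of B to W × W is non-degenerate. -/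
open Module

/-- if W is a self-dual irreducible FN-submodule of multiplicity 1 in V↓N, and B
is a non-degenerate G-invariant bilinear form on the irreducible module V, then B restricted to
W is non-degenerate. -/
theorem stmt_19 {F : Type} [Field F] [CharP F 2] {G : Type} [Group G] [Finite G]
    (N : Subgroup G) [N.Normal]
    (hsplit : ∀ H : Subgroup G, IsSplitting F ↥H)
    {V : Type} [AddCommGroup V] [Module F V] [FiniteDimensional F V]
    (ρ : Representation F G V) (hirrV : IsIrred ρ)
    (B : V →ₗ[F] V →ₗ[F] F) (hBinv : BilinInvariant ρ B) (hBnd : Nondeg B)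
    (W : Submodule F V) (σ : Representation F ↥N ↥W)
    (hcompat : ∀ (m : ↥N) (w : ↥W), (σ m w : V) = ρ (m : G) (w : V))
    (hirrW : IsIrred σ) (hsdW : IsSelfDual σ)
    (hmult : repMult σ (ρ.comp N.subtype) = 1) :
    ∀ v ∈ W, (∀ w ∈ W, B v w = 0) → v = 0 := by
  classical
  obtain ⟨hWnt, hWirr⟩ := hirrW
  -- restricted bilinear form and its radical
  set Br : ↥W →ₗ[F] ↥W →ₗ[F] F := B.compl₁₂ W.subtype W.subtype with hBr
  have hBrapp : ∀ a b : ↥W, Br a b = B (a : V) (b : V) := fun a b => rfl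
  -- radical is a subrep
  have hrad : IsSubrep σ (LinearMap.ker Br) := by
    intro n a ha
    rw [LinearMap.mem_ker] at ha ⊢
    ext b
    have h1 : (b : V) = ρ (n : G) ((σ n⁻¹ b : V)) := by
      rw [hcompat]
      have : ρ (n : G) * ρ ((n⁻¹ : ↥N) : G) = 1 := by
        rw [← map_mul]
        simp
      calc (b : V) = (ρ (n : G) * ρ ((n⁻¹ : ↥N) : G)) (b : V) := by rw [this]; rfl
        _ = ρ (n : G) (ρ ((n⁻¹ : ↥N) : G) (b : V)) := rfl
    have : Br a (σ n⁻¹ b) = 0 := by rw [ha]; rfl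
    rw [hBrapp] at this ⊢
    rw [hcompat, h1, hBinv]
    exact this
  rcases hWirr _ hrad with hbot | htop
  · -- radical = ⊥ : done
    intro v hv hB0
    have : (⟨v, hv⟩ : ↥W) ∈ LinearMap.ker Br := by
      rw [LinearMap.mem_ker]
      ext b
      exact hB0 (b : V) b.2
    rw [hbot, Submodule.mem_bot] at this
    exact congrArg Subtype.val this
  · -- radical = ⊤ : derive False
    exfalso
    have hB0 : ∀ a b : ↥W, B (a : V) (b : V) = 0 := by
      intro a b
      have : a ∈ LinearMap.ker Br := htop ▸ Submodule.mem_top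
      rw [LinearMap.mem_ker] at this
      have := congrArg (fun f => f b) this
      simpa [hBrapp] using this
    obtain ⟨e, he⟩ := hsdW
    -- φ : V →ₗ Dual F ↥W
    set φ : V →ₗ[F] Module.Dual F ↥W := W.subtype.dualMap.comp B with hφ
    have hφapp : ∀ (v : V) (b : ↥W), φ v b = B v (b : V) := fun v b => rfl
    have hφsurj : Function.Surjective φ := by
      apply Function.Surjective.comp (LinearMap.dualMap_surjective_of_injective W.injective_subtype)
      have hinj : Function.Injective (B : V →ₗ[F] Module.Dual F V) := by
        intro v v' hvv'
        have h0 : ∀ w : V, B (v - v') w = 0 := by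
          intro w
          simp [map_sub, LinearMap.sub_apply, show B v = B v' from hvv']
        exact sub_eq_zero.mp (hBnd _ h0)
      exact (LinearMap.injective_iff_surjective_of_finrank_eq_finrank
        Subspace.dual_finrank_eq.symm).mp hinj
    set u : V →ₗ[F] ↥W := (e.symm.toLinearMap).comp φ with hu
    have husurj : Function.Surjective u := e.symm.surjective.comp hφsurj
    -- equivariance of u
    have hinv_apply : ∀ (n : ↥N) (v : V), ρ ((n : G))⁻¹ (ρ (n : G) v) = v := by
      intro n v
      have : ρ ((n : G))⁻¹ * ρ (n : G) = 1 := by rw [← map_mul]; simp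
      calc ρ ((n:G))⁻¹ (ρ (n:G) v) = (ρ ((n:G))⁻¹ * ρ (n:G)) v := rfl
        _ = v := by rw [this]; rfl
    have huequiv : ∀ (n : ↥N) (v : V), u (ρ (n : G) v) = σ n (u v) := by
      intro n v
      have key : φ (ρ (n : G) v) = σ.dual n (φ v) := by
        ext b
        have h1 : (σ.dual n (φ v)) b = φ v (σ n⁻¹ b) := rfl
        rw [h1, hφapp, hφapp, hcompat]
        have : ((n⁻¹ : ↥N) : G) = ((n : G))⁻¹ := rfl
        rw [this]
        conv_lhs => rw [show (b : V) = ρ (n : G) (ρ ((n:G))⁻¹ (b:V)) by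
          rw [show ρ (n:G) (ρ ((n:G))⁻¹ (b:V)) = (ρ (n:G) * ρ ((n:G))⁻¹) (b:V) from rfl]
          rw [← map_mul]; simp]
        rw [hBinv]
      have h2 : e (σ n (u v)) = σ.dual n (e (u v)) := he n (u v)
      have h3 : e (u v) = φ v := by
        simp [hu]
      apply e.injective
      rw [h2, h3]
      show e (e.symm (φ (ρ (n:G) v))) = _
      rw [LinearEquiv.apply_symm_apply, key]
    -- u vanishes on W
    have huW : ∀ b : ↥W, u ((b : V)) = 0 := by
      intro b
      have : φ (b : V) = 0 := by
        ext b'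
        rw [hφapp]
        exact hB0 b b'
      simp [hu, this]
    -- the G-span of W is all of V
    have hTsub : IsSubrep ρ (⨆ g : G, W.map (ρ g)) := by
      intro g v hv
      have hmap : Submodule.map (ρ g) (⨆ h : G, W.map (ρ h)) ≤ ⨆ h : G, W.map (ρ h) := by
        rw [Submodule.map_iSup]
        apply iSup_le
        intro h
        rw [← Submodule.map_comp]
        have : (ρ g) ∘ₗ (ρ h) = ρ (g * h) := by rw [map_mul]; rfl
        rw [this]
        exact le_iSup (fun k => W.map (ρ k)) (g * h)
      exact hmap ⟨v, hv, rfl⟩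
    have hT : (⨆ g : G, W.map (ρ g)) = ⊤ := by
      rcases hirrV.2 (⨆ g : G, W.map (ρ g)) hTsub with hbot' | htop'
      · exfalso
        obtain ⟨b, b', hbb'⟩ := hWnt
        have hb : (b : V) - (b' : V) ≠ 0 := by
          intro h
          exact hbb' (Subtype.ext (sub_eq_zero.mp h))
        have : (b : V) - (b' : V) ∈ W.map (ρ (1 : G)) := by
          refine ⟨(b : V) - (b' : V), sub_mem b.2 b'.2, ?_⟩
          simp
        have hmem : (b : V) - (b' : V) ∈ (⨆ g : G, W.map (ρ g)) :=
          le_iSup (fun g => W.map (ρ g)) 1 this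
        rw [hbot', Submodule.mem_bot] at hmem
        exact hb hmem
      · exact htop'
    -- find g, w0 with u (ρ g w0) ≠ 0
    have : ∃ (g : G) (w0 : ↥W), u (ρ g (w0 : V)) ≠ 0 := by
      by_contra h
      push_neg at h
      have hker : (⨆ g : G, W.map (ρ g)) ≤ LinearMap.ker u := by
        apply iSup_le
        rintro g _ ⟨w, hw, rfl⟩
        exact LinearMap.mem_ker.mpr (h g ⟨w, hw⟩)
      rw [hT, top_le_iff] at hker
      obtain ⟨b, b', hbb'⟩ := hWnt
      obtain ⟨v, hv⟩ := husurj (b - b')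
      have huv : u v = 0 := by
        have hm : v ∈ LinearMap.ker u := by rw [hker]; trivial
        exact hm
      rw [hv] at huv
      exact hbb' (sub_eq_zero.mp huv)
    obtain ⟨g, w0, hw0⟩ := this
    -- f : W →ₗ W
    set f : ↥W →ₗ[F] ↥W := u ∘ₗ (ρ g) ∘ₗ W.subtype with hf
    have hfapp : ∀ b : ↥W, f b = u (ρ g (b : V)) := fun b => rfl
    have hfne : f ≠ 0 := by
      intro h
      apply hw0
      rw [← hfapp, h]
      rfl
    -- conjugated element
    have hconj : ∀ n : ↥N, g * (n : G) * g⁻¹ ∈ N := fun n =>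
      Subgroup.Normal.conj_mem ‹N.Normal› _ n.2 g
    -- f intertwines σ n with σ (conj n)
    have hfint : ∀ (n : ↥N) (b : ↥W), f (σ n b) = σ ⟨g * (n:G) * g⁻¹, hconj n⟩ (f b) := by
      intro n b
      rw [hfapp, hfapp, hcompat]
      have h1 : ρ g (ρ (n : G) (b : V)) = ρ (g * (n:G) * g⁻¹) (ρ g (b:V)) := by
        rw [show ρ g (ρ (n:G) (b:V)) = (ρ g * ρ (n:G)) (b:V) from rfl, ← map_mul]
        rw [show ρ (g * (n:G) * g⁻¹) (ρ g (b:V)) = (ρ (g * (n:G) * g⁻¹) * ρ g) (b:V) from rfl,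
          ← map_mul]
        congr 1
        group
      rw [h1]
      exact huequiv ⟨g * (n:G) * g⁻¹, hconj n⟩ _
    -- j : W →ₗ V, equivariant
    set j : ↥W →ₗ[F] V := (ρ g⁻¹) ∘ₗ W.subtype ∘ₗ f with hj
    have hjapp : ∀ b : ↥W, j b = ρ g⁻¹ ((f b : V)) := fun b => rfl
    have hjmem : j ∈ EquivHom σ (ρ.comp N.subtype) := by
      intro n b
      rw [hjapp, hjapp, hfint n b, hcompat]
      show ρ g⁻¹ (ρ (g * (n:G) * g⁻¹) ((f b : V))) = ρ (n:G) (ρ g⁻¹ ((f b : V)))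
      rw [show ρ g⁻¹ (ρ (g * (n:G) * g⁻¹) ((f b:V))) = (ρ g⁻¹ * ρ (g * (n:G) * g⁻¹)) ((f b:V)) from rfl,
        show ρ (n:G) (ρ g⁻¹ ((f b:V))) = (ρ (n:G) * ρ g⁻¹) ((f b:V)) from rfl,
        ← map_mul, ← map_mul]
      congr 1
      group
    have hιmem : (W.subtype : ↥W →ₗ[F] V) ∈ EquivHom σ (ρ.comp N.subtype) := by
      intro n b
      exact hcompat n b
    -- multiplicity 1
    haveI := hWnt
    obtain ⟨b0, hb0⟩ := exists_ne (0 : ↥W)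
    have hιne : (⟨W.subtype, hιmem⟩ : EquivHom σ (ρ.comp N.subtype)) ≠ 0 := by
      intro h
      apply hb0
      have h2 : (W.subtype : ↥W →ₗ[F] V) = 0 := Subtype.ext_iff.mp h
      have h3 := LinearMap.congr_fun h2 b0
      exact Submodule.coe_eq_zero.mp (by simpa using h3)
    have h1d : Module.finrank F (EquivHom σ (ρ.comp N.subtype)) = 1 := hmult
    obtain ⟨c, hc⟩ := (finrank_eq_one_iff_of_nonzero' _ hιne).mp h1d
      (⟨j, hjmem⟩ : EquivHom σ (ρ.comp N.subtype))
    have hcapp : ∀ b : ↥W, c • (b : V) = j b := by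
      intro b
      have h2 : c • (W.subtype : ↥W →ₗ[F] V) = j := by
        have := Subtype.ext_iff.mp hc
        simpa using this
      have h3 := LinearMap.congr_fun h2 b
      simpa using h3
    have hcne : c ≠ 0 := by
      intro h
      apply hfne
      ext b
      have h2 := hcapp b
      rw [h, zero_smul, hjapp] at h2
      have : (f b : V) = 0 := by
        have := congrArg (ρ g) h2.symm
        rw [show ρ g (ρ g⁻¹ ((f b : V))) = (ρ g * ρ g⁻¹) ((f b:V)) from rfl, ← map_mul] at this
        simpa using this
      simpa using this
    -- final contradiction
    apply hw0
    have h2 := hcapp w0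
    rw [hjapp] at h2
    have h3 : ρ g (w0 : V) = c⁻¹ • (f w0 : V) := by
      have := congrArg (ρ g) h2
      rw [map_smul, show ρ g (ρ g⁻¹ ((f w0 : V))) = (ρ g * ρ g⁻¹) ((f w0:V)) from rfl,
        ← map_mul] at this
      simp only [mul_inv_cancel, map_one, Module.End.one_apply] at this
      rw [← this, smul_smul, inv_mul_cancel₀ hcne, one_smul]
    rw [h3, show c⁻¹ • (f w0 : V) = ((c⁻¹ • f w0 : ↥W) : V) from rfl]
    exact huW _
end
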